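/- Let Q ≥ 2 be an integer and let χ, μ, σ ∈ ℝ satisfy 0 ≤ χ < 1, μ < 2−χ, and σ ≥ (2−χ−μ)/(1−χ). Define u : ℝ^Q → ℝ by u(x) = (1+|x|²)^{σ/2}. Then there exists a constant C > 0 such that for every x ∈ ℝ^Q, div(∇u/√(1+|∇u|²))(x) ≥ C (1+|x|)^{−μ} |∇u(x)|^{χ} / √(1+|∇u(x)|²). In particular, u is an unbounded smooth solution growing like |x|^{σ} with σ ≥ σ* = (2−χ−μ)/(1−χ), showing the sharpness of the range in which the maximum principle (the case H = 0) holds. -/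

import Mathlib

open Set Filter Classical

noncomputable section

/-- The divergence of a vector field `V` on `ℝ^Q`: the sum of the partial derivatives
`∂ᵢ Vᵢ`. -/
def divg {Q : ℕ} (V : EuclideanSpace ℝ (Fin Q) → EuclideanSpace ℝ (Fin Q))
    (x : EuclideanSpace ℝ (Fin Q)) : ℝ :=
  ∑ i, fderiv ℝ V x (EuclideanSpace.single i 1) i

/-! ### Auxiliary one-variable functions -/

def phiF (σ t : ℝ) : ℝ := σ * (1 + t) ^ (σ / 2 - 1)
def phidF (σ t : ℝ) : ℝ := σ * ((σ / 2 - 1) * (1 + t) ^ (σ / 2 - 2))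
def wwF (σ t : ℝ) : ℝ := 1 + (phiF σ t) ^ 2 * t
def wwdF (σ t : ℝ) : ℝ := (2 * phiF σ t ^ 1 * phidF σ t) * t + (phiF σ t) ^ 2
def psiF (σ t : ℝ) : ℝ := (Real.sqrt (wwF σ t))⁻¹ * phiF σ t
def psidF (σ t : ℝ) : ℝ :=
  -(wwdF σ t / (2 * Real.sqrt (wwF σ t))) / (Real.sqrt (wwF σ t)) ^ 2 * phiF σ t
    + (Real.sqrt (wwF σ t))⁻¹ * phidF σ t

lemma wwF_pos (σ : ℝ) {t : ℝ} (ht : 0 ≤ t) : 0 < wwF σ t := by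
  unfold wwF; positivity

lemma hasDerivAt_rpow1p (p : ℝ) {t : ℝ} (ht : 0 ≤ t) :
    HasDerivAt (fun s : ℝ => (1 + s) ^ p) (p * (1 + t) ^ (p - 1)) t := by
  have hpos : (0:ℝ) < 1 + t := by linarith
  have := Real.hasDerivAt_rpow_const (x := 1 + t) (p := p) (Or.inl hpos.ne')
  have hadd : HasDerivAt (fun s : ℝ => 1 + s) 1 t := (hasDerivAt_id _).const_add 1
  simpa [Function.comp_def] using this.comp t hadd

lemma hasDerivAt_phiF (σ : ℝ) {t : ℝ} (ht : 0 ≤ t) :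
    HasDerivAt (phiF σ) (phidF σ t) t := by
  have h := (hasDerivAt_rpow1p (σ / 2 - 1) ht).const_mul σ
  unfold phiF
  simpa [phiF, phidF, show σ / 2 - 1 - 1 = σ / 2 - 2 by ring] using h

lemma hasDerivAt_wwF (σ : ℝ) {t : ℝ} (ht : 0 ≤ t) :
    HasDerivAt (wwF σ) (wwdF σ t) t := by
  have h : HasDerivAt (wwF σ)
      ((2:ℕ) * phiF σ t ^ (2-1) * phidF σ t * t + phiF σ t ^ 2 * 1) t :=
    (((hasDerivAt_phiF σ ht).pow 2).mul (hasDerivAt_id t)).const_add 1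
  unfold wwdF
  convert h using 1
  push_cast
  ring

lemma hasDerivAt_psiF (σ : ℝ) {t : ℝ} (ht : 0 ≤ t) :
    HasDerivAt (psiF σ) (psidF σ t) t := by
  have hw := wwF_pos σ ht
  have hsqrt : HasDerivAt (fun s => Real.sqrt (wwF σ s))
      (wwdF σ t / (2 * Real.sqrt (wwF σ t))) t := by
    have := (Real.hasDerivAt_sqrt hw.ne').comp t (hasDerivAt_wwF σ ht)
    simpa [div_eq_inv_mul, mul_comm, mul_assoc, Function.comp_def] using this
  have hne : Real.sqrt (wwF σ t) ≠ 0 := (Real.sqrt_pos.mpr hw).ne'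
  exact (hsqrt.inv hne).mul (hasDerivAt_phiF σ ht)

lemma alg (Qr φ φd t W : ℝ) (hW : 0 < W) (hW2 : W^2 = 1 + φ^2*t) :
    Qr * (W⁻¹ * φ) + 2*t*(-((2 * φ^1 * φd * t + φ^2) / (2*W))/W^2*φ + W⁻¹*φd)
      = (Qr*φ + (Qr-1)*t*φ^3 + 2*t*φd) / (W^2*W) := by
  have h : W ≠ 0 := hW.ne'
  field_simp
  linear_combination (Qr*φ + 2*t*φd) * hW2

/-- The gradient of `u`. -/
lemma hasGradientAt_u {E : Type*} [NormedAddCommGroup E] [InnerProductSpace ℝ E]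
    [CompleteSpace E] (σ : ℝ) (x : E) :
    HasGradientAt (fun y : E => (1 + ‖y‖ ^ 2) ^ (σ / 2))
      ((σ * (1 + ‖x‖ ^ 2) ^ (σ / 2 - 1)) • x) x := by
  have h1 : HasFDerivAt (fun y : E => ‖y‖ ^ 2) (2 • (innerSL ℝ x)) x :=
    (hasStrictFDerivAt_norm_sq x).hasFDerivAt
  have hpos : (0:ℝ) < 1 + ‖x‖ ^ 2 := by positivity
  have h2 : HasDerivAt (fun t : ℝ => (1 + t) ^ (σ / 2))
      ((σ / 2) * (1 + ‖x‖ ^ 2) ^ (σ / 2 - 1)) (‖x‖ ^ 2) := by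
    have := Real.hasDerivAt_rpow_const (x := 1 + ‖x‖ ^ 2) (p := σ / 2) (Or.inl hpos.ne')
    have hadd : HasDerivAt (fun t : ℝ => 1 + t) 1 (‖x‖ ^ 2) :=
      (hasDerivAt_id _).const_add 1
    simpa [Function.comp_def] using this.comp (‖x‖ ^ 2) hadd
  have h3 := h2.comp_hasFDerivAt x h1
  rw [hasGradientAt_iff_hasFDerivAt]
  refine h3.congr_fderiv ?_
  ext y
  simp [InnerProductSpace.toDual_apply_apply, real_inner_smul_left, smul_smul]
  ring

set_option maxHeartbeats 1000000 in
/-- The analytic core inequality. -/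
lemma core (Q : ℕ) (hQ : 2 ≤ Q) (χ μ σ : ℝ)
    (hχ0 : 0 ≤ χ) (hχ1 : χ < 1) (hμ : μ < 2 - χ) (hσ : (2 - χ - μ) / (1 - χ) ≤ σ)
    (r : ℝ) (hr : 0 ≤ r) :
    min σ 1 * (σ ^ (1 - χ) * min 1 ((2:ℝ) ^ (-((σ/2 - 1) * (1 - χ)))))
        * (1 + r) ^ (-μ) * (phiF σ (r^2) * r) ^ χ / Real.sqrt (wwF σ (r^2))
      ≤ (Q : ℝ) * psiF σ (r^2) + 2 * r^2 * psidF σ (r^2) := by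
  set t := r^2 with ht_def
  have ht : 0 ≤ t := sq_nonneg r
  have h1χ : 0 < 1 - χ := by linarith
  have hσ0 : 0 < σ := lt_of_lt_of_le (div_pos (by linarith) h1χ) hσ
  have h1t : (0:ℝ) < 1 + t := by linarith
  have hφ : 0 < phiF σ t := by unfold phiF; positivity
  have hw : 0 < wwF σ t := wwF_pos σ ht
  set W := Real.sqrt (wwF σ t) with hW_def
  have hW : 0 < W := Real.sqrt_pos.mpr hw
  have hW2 : W ^ 2 = 1 + phiF σ t ^ 2 * t := by
    rw [hW_def, Real.sq_sqrt hw.le]; rfl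
  have key : (Q:ℝ) * psiF σ t + 2*t*psidF σ t
      = ((Q:ℝ)*phiF σ t + ((Q:ℝ)-1)*t*phiF σ t^3 + 2*t*phidF σ t) / (W^2*W) :=
    alg (Q:ℝ) (phiF σ t) (phidF σ t) t W hW hW2
  have hφd : phidF σ t = phiF σ t * (σ/2 - 1) / (1 + t) := by
    unfold phiF phidF
    rw [show σ/2 - 2 = (σ/2 - 1) - 1 by ring, Real.rpow_sub h1t, Real.rpow_one]
    ring
  have hQ2 : (2:ℝ) ≤ (Q:ℝ) := by exact_mod_cast hQ
  have hmσ : min σ 1 ≤ σ := min_le_left _ _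
  have hm1 : min σ 1 ≤ 1 := min_le_right _ _
  have hN : min σ 1 * phiF σ t * W^2
      ≤ (Q:ℝ)*phiF σ t + ((Q:ℝ)-1)*t*phiF σ t^3 + 2*t*phidF σ t := by
    rw [hφd, hW2]
    set p := phiF σ t with hp
    rcases le_total σ 2 with h2 | h2
    · have key2 : p*(σ-2) ≤ 2*t*(p*(σ/2-1)/(1+t)) := by
        have heq : 2*t*(p*(σ/2-1)/(1+t)) - p*(σ-2) = p*(2-σ)/(1+t) := by
          field_simp; ring
        have hge : 0 ≤ p*(2-σ)/(1+t) :=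
          div_nonneg (mul_nonneg hφ.le (by linarith)) h1t.le
        linarith
      have f1 : 0 ≤ ((Q:ℝ)-1-min σ 1)*(t*p^3) :=
        mul_nonneg (by linarith) (mul_nonneg ht (by positivity))
      have f2 : 0 ≤ ((Q:ℝ)-2+σ-min σ 1)*p := mul_nonneg (by linarith) hφ.le
      nlinarith [key2, f1, f2]
    · have key2 : 0 ≤ 2*t*(p*(σ/2-1)/(1+t)) := by
        have : 0 ≤ p*(σ/2-1)/(1+t) := by
          apply div_nonneg _ h1t.le
          apply mul_nonneg hφ.le; linarith
        positivity
      have f1 : 0 ≤ ((Q:ℝ)-1-min σ 1)*(t*p^3) :=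
        mul_nonneg (by linarith) (mul_nonneg ht (by positivity))
      have f2 : 0 ≤ ((Q:ℝ)-min σ 1)*p := mul_nonneg (by linarith) hφ.le
      nlinarith [key2, f1, f2]
  have hdiv : min σ 1 * phiF σ t / W ≤ (Q:ℝ) * psiF σ t + 2*t*psidF σ t := by
    rw [key, div_le_div_iff₀ hW (by positivity)]
    calc min σ 1 * phiF σ t * (W^2*W) = (min σ 1 * phiF σ t * W^2) * W := by ring
      _ ≤ ((Q:ℝ)*phiF σ t + ((Q:ℝ)-1)*t*phiF σ t^3 + 2*t*phidF σ t) * W :=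
          mul_le_mul_of_nonneg_right hN hW.le
  set a := (σ/2 - 1) * (1 - χ) with ha_def
  have h1r : (0:ℝ) < 1 + r := by linarith
  have hL : min σ 1 * (σ ^ (1-χ) * min 1 ((2:ℝ)^(-a))) * (1 + r)^(-μ) * (phiF σ t * r)^χ
      ≤ min σ 1 * phiF σ t := by
    have hrφ : (phiF σ t * r)^χ = phiF σ t ^ χ * r ^ χ := Real.mul_rpow hφ.le hr
    have hφsplit : phiF σ t = phiF σ t ^ ((1:ℝ)-χ) * phiF σ t ^ χ := by
      rw [← Real.rpow_add hφ]; norm_num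
    have hφpow : phiF σ t ^ ((1:ℝ)-χ) = σ^(1-χ) * (1+t)^a := by
      unfold phiF
      rw [Real.mul_rpow hσ0.le (Real.rpow_nonneg h1t.le _), ← Real.rpow_mul h1t.le]
    have hsq : ((1+r)^2 : ℝ)^a = (1+r)^(2*a) := by
      rw [← Real.rpow_natCast (1+r) 2, ← Real.rpow_mul h1r.le]
      norm_num
    have hbase1 : (1+r)^2/2 ≤ 1 + t := by rw [ht_def]; nlinarith [sq_nonneg (1-r)]
    have hbase2 : 1 + t ≤ (1+r)^2 := by rw [ht_def]; nlinarith
    have hm : min 1 ((2:ℝ)^(-a)) * (1+r)^(2*a) ≤ (1+t)^a := by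
      rcases le_total 0 a with ha | ha
      · calc min 1 ((2:ℝ)^(-a)) * (1+r)^(2*a)
            ≤ (2:ℝ)^(-a) * (1+r)^(2*a) :=
              mul_le_mul_of_nonneg_right (min_le_right _ _) (Real.rpow_nonneg h1r.le _)
          _ = ((1+r)^2/2)^a := by
              rw [Real.div_rpow (by positivity) (by norm_num), Real.rpow_neg (by norm_num),
                hsq]
              ring
          _ ≤ (1+t)^a := Real.rpow_le_rpow (by positivity) hbase1 ha
      · calc min 1 ((2:ℝ)^(-a)) * (1+r)^(2*a)
            ≤ 1 * (1+r)^(2*a) :=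
              mul_le_mul_of_nonneg_right (min_le_left _ _) (Real.rpow_nonneg h1r.le _)
          _ = ((1+r)^2)^a := by rw [one_mul, hsq]
          _ ≤ (1+t)^a := Real.rpow_le_rpow_of_nonpos h1t hbase2 ha
    have hexp : χ - μ ≤ 2*a := by
      have hle : 2 - χ - μ ≤ σ * (1 - χ) := (div_le_iff₀ h1χ).mp hσ
      have h2a : 2*a = σ*(1-χ) - 2*(1-χ) := by rw [ha_def]; ring
      linarith
    have hrχ : (1+r)^(-μ) * r^χ ≤ (1+r)^(2*a) := by
      calc (1+r)^(-μ) * r^χ ≤ (1+r)^(-μ) * (1+r)^χ := by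
            apply mul_le_mul_of_nonneg_left _ (Real.rpow_nonneg h1r.le _)
            exact Real.rpow_le_rpow hr (by linarith) hχ0
        _ = (1+r)^(-μ + χ) := (Real.rpow_add h1r _ _).symm
        _ ≤ (1+r)^(2*a) := Real.rpow_le_rpow_of_exponent_le (by linarith) (by linarith)
    have hA : (0:ℝ) ≤ min σ 1 * σ^(1-χ) := by
      apply mul_nonneg (le_min hσ0.le zero_le_one) (Real.rpow_nonneg hσ0.le _)
    calc min σ 1 * (σ ^ (1-χ) * min 1 ((2:ℝ)^(-a))) * (1 + r)^(-μ) * (phiF σ t * r)^χ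
        = (min σ 1 * σ^(1-χ)) * (min 1 ((2:ℝ)^(-a)) * ((1+r)^(-μ) * r^χ)) * phiF σ t ^ χ := by
          rw [hrφ]; ring
      _ ≤ (min σ 1 * σ^(1-χ)) * (min 1 ((2:ℝ)^(-a)) * (1+r)^(2*a)) * phiF σ t ^ χ := by
          apply mul_le_mul_of_nonneg_right _ (Real.rpow_nonneg hφ.le _)
          apply mul_le_mul_of_nonneg_left _ hA
          apply mul_le_mul_of_nonneg_left hrχ (le_min zero_le_one (Real.rpow_nonneg (by norm_num) _))
      _ ≤ (min σ 1 * σ^(1-χ)) * (1+t)^a * phiF σ t ^ χ := by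
          apply mul_le_mul_of_nonneg_right _ (Real.rpow_nonneg hφ.le _)
          exact mul_le_mul_of_nonneg_left hm hA
      _ = min σ 1 * (phiF σ t ^ ((1:ℝ)-χ) * phiF σ t ^ χ) := by rw [hφpow]; ring
      _ = min σ 1 * phiF σ t := by rw [← hφsplit]
  calc min σ 1 * (σ ^ (1 - χ) * min 1 ((2:ℝ) ^ (-a))) * (1 + r) ^ (-μ) * (phiF σ t * r) ^ χ / W
      ≤ min σ 1 * phiF σ t / W := by gcongr
    _ ≤ (Q : ℝ) * psiF σ t + 2*t*psidF σ t := hdiv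

/-- Sharpness of the maximum principle: for `0 ≤ χ < 1`, `μ < 2−χ` and
`σ ≥ (2−χ−μ)/(1−χ)`, the unbounded function `u(x) = (1+|x|²)^{σ/2}` on `ℝ^Q`, `Q ≥ 2`,
satisfies `div(∇u/√(1+|∇u|²)) ≥ C(1+|x|)^{−μ}|∇u|^χ/√(1+|∇u|²)` for some `C > 0`. -/
theorem statement14 (Q : ℕ) (hQ : 2 ≤ Q) (χ μ σ : ℝ)
    (hχ0 : 0 ≤ χ) (hχ1 : χ < 1) (hμ : μ < 2 - χ) (hσ : (2 - χ - μ) / (1 - χ) ≤ σ) :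
    ∃ C : ℝ, 0 < C ∧ ∀ x : EuclideanSpace ℝ (Fin Q),
      C * (1 + ‖x‖) ^ (-μ) *
        ‖gradient (fun y : EuclideanSpace ℝ (Fin Q) => (1 + ‖y‖ ^ 2) ^ (σ / 2)) x‖ ^ χ /
        Real.sqrt (1 + ‖gradient
          (fun y : EuclideanSpace ℝ (Fin Q) => (1 + ‖y‖ ^ 2) ^ (σ / 2)) x‖ ^ 2)
      ≤ divg (fun y : EuclideanSpace ℝ (Fin Q) =>
          (Real.sqrt (1 + ‖gradient
            (fun z : EuclideanSpace ℝ (Fin Q) => (1 + ‖z‖ ^ 2) ^ (σ / 2)) y‖ ^ 2))⁻¹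
          • gradient (fun z : EuclideanSpace ℝ (Fin Q) => (1 + ‖z‖ ^ 2) ^ (σ / 2)) y) x := by
  have h1χ : 0 < 1 - χ := by linarith
  have hσ0 : 0 < σ := lt_of_lt_of_le (div_pos (by linarith) h1χ) hσ
  refine ⟨min σ 1 * (σ ^ (1 - χ) * min 1 ((2:ℝ) ^ (-((σ/2 - 1) * (1 - χ))))), ?_, ?_⟩
  · exact mul_pos (lt_min hσ0 one_pos)
      (mul_pos (Real.rpow_pos_of_pos hσ0 _)
        (lt_min one_pos (Real.rpow_pos_of_pos two_pos _)))
  · intro x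
    have hgrad : ∀ y : EuclideanSpace ℝ (Fin Q),
        gradient (fun z : EuclideanSpace ℝ (Fin Q) => (1 + ‖z‖ ^ 2) ^ (σ / 2)) y
          = phiF σ (‖y‖^2) • y := fun y => (hasGradientAt_u σ y).gradient
    have hφ : ∀ y : EuclideanSpace ℝ (Fin Q), 0 < phiF σ (‖y‖^2) := by
      intro y; unfold phiF; positivity
    have hVeq : (fun y : EuclideanSpace ℝ (Fin Q) =>
          (Real.sqrt (1 + ‖gradient
            (fun z : EuclideanSpace ℝ (Fin Q) => (1 + ‖z‖ ^ 2) ^ (σ / 2)) y‖ ^ 2))⁻¹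
          • gradient (fun z : EuclideanSpace ℝ (Fin Q) => (1 + ‖z‖ ^ 2) ^ (σ / 2)) y)
        = fun y : EuclideanSpace ℝ (Fin Q) => psiF σ (‖y‖^2) • y := by
      funext y
      rw [hgrad y, norm_smul, smul_smul]
      congr 1
      unfold psiF wwF
      rw [mul_pow, Real.norm_eq_abs, sq_abs]
    have ht : (0:ℝ) ≤ ‖x‖^2 := sq_nonneg _
    have hs : HasFDerivAt (fun y : EuclideanSpace ℝ (Fin Q) => psiF σ (‖y‖^2))
        (psidF σ (‖x‖^2) • (2 • innerSL ℝ x)) x :=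
      ((hasDerivAt_psiF σ ht).comp_hasFDerivAt x (hasStrictFDerivAt_norm_sq x).hasFDerivAt :
        HasFDerivAt (psiF σ ∘ fun y : EuclideanSpace ℝ (Fin Q) => ‖y‖^2) _ x)
    have hV : HasFDerivAt (fun y : EuclideanSpace ℝ (Fin Q) => psiF σ (‖y‖^2) • y)
        (psiF σ (‖x‖^2) • ContinuousLinearMap.id ℝ (EuclideanSpace ℝ (Fin Q))
          + (psidF σ (‖x‖^2) • (2 • innerSL ℝ x)).smulRight x) x :=
      hs.smul (hasFDerivAt_id x)
    have hsum : ∑ i, x i * x i = ‖x‖^2 := by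
      rw [← real_inner_self_eq_norm_sq]
      simp [PiLp.inner_apply, RCLike.inner_apply]
      rw [EuclideanSpace.real_norm_sq_eq]; simp [sq]
    have hdivg : divg (fun y : EuclideanSpace ℝ (Fin Q) => psiF σ (‖y‖^2) • y) x
        = Q * psiF σ (‖x‖^2) + 2*‖x‖^2*psidF σ (‖x‖^2) := by
      unfold divg
      rw [hV.fderiv]
      have heval : ∀ i : Fin Q,
          (psiF σ (‖x‖^2) • ContinuousLinearMap.id ℝ (EuclideanSpace ℝ (Fin Q))
            + (psidF σ (‖x‖^2) • (2 • innerSL ℝ x)).smulRight x)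
            (EuclideanSpace.single i 1) i
          = psiF σ (‖x‖^2) + 2 * psidF σ (‖x‖^2) * (x i * x i) := by
        intro i
        simp [ContinuousLinearMap.smulRight_apply, EuclideanSpace.inner_single_right,
          EuclideanSpace.single_apply, real_inner_comm]
        ring
      rw [Finset.sum_congr rfl (fun i _ => heval i), Finset.sum_add_distrib,
        Finset.sum_const, ← Finset.mul_sum, hsum]
      simp [Finset.card_univ]
      ring
    rw [hVeq, hdivg, hgrad x, norm_smul, Real.norm_eq_abs, abs_of_pos (hφ x)]
    have hww : 1 + (phiF σ (‖x‖^2) * ‖x‖)^2 = wwF σ (‖x‖^2) := by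
      unfold wwF; ring
    rw [hww]
    have hcore := core Q hQ χ μ σ hχ0 hχ1 hμ hσ ‖x‖ (norm_nonneg x)
    linarith [hcore]
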